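/- With the stuffle product ⋆ defined by 1 ⋆ w = w ⋆ 1 = w and z_{s,u} w ⋆ z_{s',u'} w' = z_{s,u}(w ⋆ z_{s',u'} w') + z_{s',u'}(z_{s,u} w ⋆ w') − z_{s+s', uu'}(w ⋆ w') on the free algebra H = K⟨z_{s,u}⟩, the product ⋆ is associative: (w ⋆ w') ⋆ w'' = w ⋆ (w' ⋆ w'') for all w, w', w'' ∈ H. -/

import Mathlib

/-- The stuffle product of two words in the letters `z_{s,u}` (a letter is a pair
`(s,u) ∈ ℕ × R`), with values in the free `K`-module on words (i.e. the underlying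
module of the free associative algebra `H = K⟨z_{s,u}⟩`), defined recursively by
`1 ⋆ w = w ⋆ 1 = w` and
`z_{s,u} w ⋆ z_{s',u'} w' = z_{s,u}(w ⋆ z_{s',u'} w') + z_{s',u'}(z_{s,u} w ⋆ w')
  − z_{s+s',uu'}(w ⋆ w')`. -/
noncomputable def stuffleW {K R : Type*} [Field K] [CommRing R] :
    List (ℕ × R) → List (ℕ × R) → (List (ℕ × R) →₀ K)
  | [], w => Finsupp.single w 1
  | x :: w, [] => Finsupp.single (x :: w) 1
  | x :: w, y :: w' =>
      Finsupp.mapDomain (fun l => x :: l) (stuffleW w (y :: w')) +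
      Finsupp.mapDomain (fun l => y :: l) (stuffleW (x :: w) w') -
      Finsupp.mapDomain (fun l => (x.1 + y.1, x.2 * y.2) :: l) (stuffleW w w')
  termination_by w w' => w.length + w'.length

/-- The `K`-bilinear extension of the stuffle product to `H`. -/
noncomputable def stuffle {K R : Type*} [Field K] [CommRing R]
    (f g : List (ℕ × R) →₀ K) : List (ℕ × R) →₀ K :=
  f.sum fun w a => g.sum fun w' b => (a * b) • stuffleW w w'

section
variable {K R : Type*} [Field K] [CommRing R]

lemma stuffleW_nil_left (w : List (ℕ × R)) : stuffleW (K:=K) [] w = Finsupp.single w 1 := by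
  simp [stuffleW]

lemma stuffleW_nil_right (w : List (ℕ × R)) : stuffleW (K:=K) w [] = Finsupp.single w 1 := by
  cases w <;> simp [stuffleW]

lemma stuffleW_cons_cons (x y : ℕ × R) (w w' : List (ℕ × R)) :
    stuffleW (K:=K) (x :: w) (y :: w') =
      Finsupp.mapDomain (fun l => x :: l) (stuffleW w (y :: w')) +
      Finsupp.mapDomain (fun l => y :: l) (stuffleW (x :: w) w') -
      Finsupp.mapDomain (fun l => (x.1 + y.1, x.2 * y.2) :: l) (stuffleW w w') := by
  rw [stuffleW]

lemma stuffle_single_single (w w' : List (ℕ × R)) (a b : K) :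
    stuffle (Finsupp.single w a) (Finsupp.single w' b) = (a * b) • stuffleW w w' := by
  simp [stuffle, Finsupp.sum_single_index]

lemma stuffle_zero_left (g : List (ℕ × R) →₀ K) : stuffle 0 g = 0 := by simp [stuffle]

lemma stuffle_zero_right (f : List (ℕ × R) →₀ K) : stuffle f 0 = 0 := by simp [stuffle]

lemma stuffle_add_left (f₁ f₂ g : List (ℕ × R) →₀ K) :
    stuffle (f₁ + f₂) g = stuffle f₁ g + stuffle f₂ g := by
  unfold stuffle
  apply Finsupp.sum_add_index' <;> intros <;>
    simp [add_mul, add_smul, Finsupp.sum_add]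

lemma stuffle_add_right (f g₁ g₂ : List (ℕ × R) →₀ K) :
    stuffle f (g₁ + g₂) = stuffle f g₁ + stuffle f g₂ := by
  unfold stuffle
  rw [← Finsupp.sum_add]
  apply Finsupp.sum_congr
  intro w _
  apply Finsupp.sum_add_index' <;> intros <;> simp [mul_add, add_smul]

lemma stuffle_smul_left (k : K) (f g : List (ℕ × R) →₀ K) :
    stuffle (k • f) g = k • stuffle f g := by
  unfold stuffle
  rw [Finsupp.sum_smul_index', Finsupp.smul_sum]
  · apply Finsupp.sum_congr
    intro w _
    rw [Finsupp.smul_sum]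
    apply Finsupp.sum_congr
    intro w' _
    rw [smul_eq_mul, mul_assoc, mul_smul]
  · intro w; simp

lemma stuffle_smul_right (k : K) (f g : List (ℕ × R) →₀ K) :
    stuffle f (k • g) = k • stuffle f g := by
  unfold stuffle
  rw [Finsupp.smul_sum]
  apply Finsupp.sum_congr
  intro w _
  rw [Finsupp.sum_smul_index', Finsupp.smul_sum]
  · apply Finsupp.sum_congr
    intro w' _
    rw [smul_eq_mul, smul_smul]
    congr 1
    ring
  · intro w'; simp

lemma stuffle_neg_left (f g : List (ℕ × R) →₀ K) : stuffle (-f) g = -stuffle f g := by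
  rw [← neg_one_smul K f, stuffle_smul_left, neg_one_smul]

lemma stuffle_sub_left (f₁ f₂ g : List (ℕ × R) →₀ K) :
    stuffle (f₁ - f₂) g = stuffle f₁ g - stuffle f₂ g := by
  rw [sub_eq_add_neg, stuffle_add_left, stuffle_neg_left, sub_eq_add_neg]

lemma stuffle_neg_right (f g : List (ℕ × R) →₀ K) : stuffle f (-g) = -stuffle f g := by
  rw [← neg_one_smul K g, stuffle_smul_right, neg_one_smul]

lemma stuffle_sub_right (f g₁ g₂ : List (ℕ × R) →₀ K) :
    stuffle f (g₁ - g₂) = stuffle f g₁ - stuffle f g₂ := by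
  rw [sub_eq_add_neg, stuffle_add_right, stuffle_neg_right, sub_eq_add_neg]

lemma stuffle_nil_left (g : List (ℕ × R) →₀ K) :
    stuffle (Finsupp.single ([] : List (ℕ × R)) 1) g = g := by
  unfold stuffle
  rw [Finsupp.sum_single_index]
  · conv_rhs => rw [← Finsupp.sum_single g]
    apply Finsupp.sum_congr
    intro w' _
    rw [stuffleW_nil_left, one_mul, Finsupp.smul_single, smul_eq_mul, mul_one]
  · simp

lemma stuffle_nil_right (f : List (ℕ × R) →₀ K) :
    stuffle f (Finsupp.single ([] : List (ℕ × R)) 1) = f := by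
  unfold stuffle
  conv_rhs => rw [← Finsupp.sum_single f]
  apply Finsupp.sum_congr
  intro w _
  rw [Finsupp.sum_single_index]
  · rw [stuffleW_nil_right, mul_one, Finsupp.smul_single, smul_eq_mul, mul_one]
  · simp

end


section
variable {K R : Type*} [Field K] [CommRing R]

lemma keyB (x y : ℕ × R) (b : List (ℕ × R)) (f : List (ℕ × R) →₀ K) :
    stuffle (Finsupp.mapDomain (fun l => x :: l) f) (Finsupp.single (y :: b) 1) =
      Finsupp.mapDomain (fun l => x :: l) (stuffle f (Finsupp.single (y :: b) 1)) +
      Finsupp.mapDomain (fun l => y :: l)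
        (stuffle (Finsupp.mapDomain (fun l => x :: l) f) (Finsupp.single b 1)) -
      Finsupp.mapDomain (fun l => (x.1 + y.1, x.2 * y.2) :: l)
        (stuffle f (Finsupp.single b 1)) := by
  induction f using Finsupp.induction_linear with
  | zero => simp [stuffle_zero_left]
  | add f₁ f₂ h₁ h₂ =>
      simp only [Finsupp.mapDomain_add, stuffle_add_left, h₁, h₂]
      abel
  | single w a =>
      simp only [Finsupp.mapDomain_single, stuffle_single_single, stuffleW_cons_cons,
        Finsupp.mapDomain_smul, smul_add, smul_sub, mul_one, one_mul]

lemma keyB' (x y : ℕ × R) (a : List (ℕ × R)) (g : List (ℕ × R) →₀ K) :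
    stuffle (Finsupp.single (x :: a) 1) (Finsupp.mapDomain (fun l => y :: l) g) =
      Finsupp.mapDomain (fun l => x :: l)
        (stuffle (Finsupp.single a 1) (Finsupp.mapDomain (fun l => y :: l) g)) +
      Finsupp.mapDomain (fun l => y :: l) (stuffle (Finsupp.single (x :: a) 1) g) -
      Finsupp.mapDomain (fun l => (x.1 + y.1, x.2 * y.2) :: l)
        (stuffle (Finsupp.single a 1) g) := by
  induction g using Finsupp.induction_linear with
  | zero => simp [stuffle_zero_right]
  | add g₁ g₂ h₁ h₂ =>
      simp only [Finsupp.mapDomain_add, stuffle_add_right, h₁, h₂]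
      abel
  | single w a' =>
      simp only [Finsupp.mapDomain_single, stuffle_single_single, stuffleW_cons_cons,
        Finsupp.mapDomain_smul, smul_add, smul_sub, mul_one, one_mul]

end

lemma mapDomain_sub' {α β M : Type*} [AddCommGroup M] (f : α → β) (g₁ g₂ : α →₀ M) :
    Finsupp.mapDomain f (g₁ - g₂) = Finsupp.mapDomain f g₁ - Finsupp.mapDomain f g₂ :=
  map_sub (Finsupp.mapDomain.addMonoidHom f) g₁ g₂

theorem stuffle_assocW {K R : Type*} [Field K] [CommRing R] :
    ∀ (a b c : List (ℕ × R)),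
      stuffle (stuffleW (K := K) a b) (Finsupp.single c 1) =
      stuffle (Finsupp.single a 1) (stuffleW b c)
  | [], b, c => by
      rw [stuffleW_nil_left, stuffle_nil_left, stuffle_single_single, one_mul, one_smul]
  | x :: a, [], c => by
      rw [stuffleW_nil_right, stuffleW_nil_left]
  | x :: a, y :: b, [] => by
      rw [stuffle_nil_right, stuffleW_nil_right, stuffle_single_single, one_mul, one_smul]
  | x :: a, y :: b, z :: c => by
      have IH1 := stuffle_assocW (K := K) a (y :: b) (z :: c)
      have IH2 := stuffle_assocW (K := K) (x :: a) (y :: b) c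
      have IH3 := stuffle_assocW (K := K) a (y :: b) c
      have IH4 := stuffle_assocW (K := K) (x :: a) b (z :: c)
      have IH5 := stuffle_assocW (K := K) (x :: a) b c
      have IH6 := stuffle_assocW (K := K) a b (z :: c)
      have IH7 := stuffle_assocW (K := K) a b c
      simp only [stuffleW_cons_cons, stuffle_add_left, stuffle_sub_left, stuffle_add_right,
        stuffle_sub_right, keyB, keyB', Finsupp.mapDomain_add, mapDomain_sub',
        IH1, ← IH2, ← IH3, ← IH4, ← IH5, ← IH6, ← IH7]
      simp only [add_assoc, mul_assoc]
      abel
  termination_by a b c => a.length + b.length + c.length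
  decreasing_by all_goals (simp only [List.length_cons]; omega)

/-- the stuffle product `⋆` on the free algebra
`H = K⟨z_{s,u} | (s,u) ∈ ℕ × R⟩` is associative. -/
theorem stmt_6 {K R : Type*} [Field K] [CommRing R]
    (f g h : List (ℕ × R) →₀ K) :
    stuffle (stuffle f g) h = stuffle f (stuffle g h) := by
  induction f using Finsupp.induction_linear with
  | zero => simp [stuffle_zero_left]
  | add f₁ f₂ h₁ h₂ => simp [stuffle_add_left, h₁, h₂]
  | single w a =>
    induction g using Finsupp.induction_linear with
    | zero => simp [stuffle_zero_left, stuffle_zero_right]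
    | add g₁ g₂ h₁ h₂ => simp [stuffle_add_left, stuffle_add_right, h₁, h₂]
    | single w' b =>
      induction h using Finsupp.induction_linear with
      | zero => simp [stuffle_zero_right]
      | add h₁ h₂ ih₁ ih₂ => simp [stuffle_add_right, ih₁, ih₂]
      | single w'' c =>
        have e1 : (Finsupp.single w a : List (ℕ × R) →₀ K) = a • Finsupp.single w 1 := by
          rw [Finsupp.smul_single, smul_eq_mul, mul_one]
        have e3 : (Finsupp.single w'' c : List (ℕ × R) →₀ K) = c • Finsupp.single w'' 1 := by
          rw [Finsupp.smul_single, smul_eq_mul, mul_one]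
        rw [stuffle_single_single w w' a b, stuffle_single_single w' w'' b c,
          stuffle_smul_left, stuffle_smul_right, e1, e3, stuffle_smul_left,
          stuffle_smul_right, stuffle_assocW, smul_smul, smul_smul]
        congr 1
        ring
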